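/- For a closed curve of length L, sweep-covered by mobile sensors of speed v with sweep period t, the deployment of n = ⌈L/(vt)⌉ sensors at positions x_k = k·v·t (mod L) for k = 0,…,n−1, all moving in the same direction at speed v, guarantees coverage: for every point x ∈ [0,L) and every time t₀ ≥ 0 there exist k ∈ {0,…,n−1} and a time s ∈ [t₀, t₀+t] such that (k·v·t + v·s) mod L = x. -/

import Mathlib

/-- `x` reduced modulo `L` into `[0, L)`. -/
noncomputable def rmod (x L : ℝ) : ℝ := x - L * ⌊x / L⌋

/-- Deploying `n = ⌈L/(vt)⌉` sensors at positions `k·v·t mod L`, all moving in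
the same direction at speed `v` on the closed curve (circle of circumference `L`),
guarantees that every point `x ∈ [0, L)` is visited in every time window `[t₀, t₀+t]`. -/
theorem closed_curve_sweep_coverage (L v t : ℝ) (hL : 0 < L) (hv : 0 < v) (ht : 0 < t)
    (n : ℕ) (hn : n = ⌈L / (v * t)⌉.toNat) :
    ∀ x ∈ Set.Ico (0 : ℝ) L, ∀ t₀ : ℝ, 0 ≤ t₀ →
      ∃ k < n, ∃ s ∈ Set.Icc t₀ (t₀ + t), rmod ((k : ℝ) * v * t + v * s) L = x := by
  rintro x ⟨hx0, hxL⟩ t₀ ht₀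
  have hvt : 0 < v * t := mul_pos hv ht
  set a : ℝ := v * t₀ with ha
  set m : ℤ := ⌈(a - x) / L⌉ with hm
  set y : ℝ := x + L * m with hy
  have hz : (a - x) / L ≤ (m : ℝ) := Int.le_ceil _
  have hz' : (m : ℝ) < (a - x) / L + 1 := Int.ceil_lt_add_one _
  have hza : a - x ≤ L * m := by
    have := (div_le_iff₀ hL).mp hz; linarith [this]
  have hzb : L * m < a - x + L := by
    have : (m : ℝ) * L < ((a - x) / L + 1) * L := by
      exact mul_lt_mul_of_pos_right hz' hL
    have h2 : ((a - x) / L) * L = a - x := div_mul_cancel₀ _ hL.ne'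
    nlinarith
  have hya : a ≤ y := by simp only [hy]; linarith
  have hyaL : y - a < L := by simp only [hy]; linarith
  -- the sensor index
  set w : ℝ := (y - a) / (v * t) with hw
  have hw0 : 0 ≤ w := div_nonneg (by linarith) hvt.le
  have hwL : w < L / (v * t) := by
    exact div_lt_div_of_pos_right (by linarith) hvt
  set k : ℕ := ⌊w⌋.toNat with hk
  have hkR : (k : ℝ) = (⌊w⌋ : ℝ) := by
    exact_mod_cast congrArg (Int.cast : ℤ → ℝ) (Int.toNat_of_nonneg (Int.floor_nonneg.mpr hw0))
  have hkn : k < n := by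
    have h1 : (⌊w⌋ : ℝ) < (⌈L / (v * t)⌉ : ℝ) := by
      calc (⌊w⌋ : ℝ) ≤ w := Int.floor_le w
        _ < L / (v * t) := hwL
        _ ≤ ⌈L / (v * t)⌉ := Int.le_ceil _
    have h2 : ⌊w⌋ < ⌈L / (v * t)⌉ := by exact_mod_cast h1
    have h3 : 0 < ⌈L / (v * t)⌉ := Int.ceil_pos.mpr (div_pos hL hvt)
    rw [hn, hk]
    omega
  refine ⟨k, hkn, (y - (k : ℝ) * v * t) / v, ⟨?_, ?_⟩, ?_⟩
  · -- t₀ ≤ s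
    rw [le_div_iff₀ hv]
    have h1 : (k : ℝ) ≤ w := by rw [hkR]; exact Int.floor_le w
    have h2 : (k : ℝ) * (v * t) ≤ y - a := by
      calc (k : ℝ) * (v * t) ≤ w * (v * t) := mul_le_mul_of_nonneg_right h1 hvt.le
        _ = y - a := div_mul_cancel₀ _ hvt.ne'
    nlinarith [h2]
  · -- s ≤ t₀ + t
    rw [div_le_iff₀ hv]
    have h1 : w < (k : ℝ) + 1 := by rw [hkR]; exact_mod_cast Int.lt_floor_add_one w
    have h2 : y - a < ((k : ℝ) + 1) * (v * t) := by
      calc y - a = w * (v * t) := (div_mul_cancel₀ _ hvt.ne').symm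
        _ < ((k : ℝ) + 1) * (v * t) := mul_lt_mul_of_pos_right h1 hvt
    nlinarith [h2]
  · -- rmod = x
    have hexp : (k : ℝ) * v * t + v * ((y - (k : ℝ) * v * t) / v) = y := by
      rw [mul_div_cancel₀ _ hv.ne']; ring
    rw [hexp, rmod, hy]
    have hfloor : ⌊(x + L * m) / L⌋ = m := by
      have : (x + L * m) / L = x / L + m := by
        field_simp
      rw [this, Int.floor_add_intCast]
      have h01 : ⌊x / L⌋ = 0 := by
        apply Int.floor_eq_zero_iff.mpr
        constructor
        · exact div_nonneg hx0 hL.le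
        · rw [div_lt_one hL]; exact hxL
      omega
    rw [hfloor]; ring
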